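/- Let A → B → C → ΣA be an Auslander-Reiten triangle in the subcategory 𝒞. Then the endomorphism rings End(A) = Hom(A, A) and End(C) = Hom(C, C) are local rings; in particular, A and C are indecomposable objects. -/

import Mathlib

open CategoryTheory CategoryTheory.Limits CategoryTheory.Pretriangulated

universe v u

variable {k : Type} [Field k]
variable {T : Type u} [Category.{v} T] [Preadditive T] [Linear k T]
  [HasZeroObject T] [HasShift T ℤ] [∀ n : ℤ, (shiftFunctor T n).Additive]
  [Pretriangulated T]

universe u'
lemma my_mul_eq_one_comm {R : Type u'} [Ring R] [Algebra k R]
    [FiniteDimensional k R] {a b : R} (h : a * b = 1) : b * a = 1 := by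
  let L : R →ₗ[k] R := LinearMap.mulLeft k b
  have hinj : Function.Injective L := by
    rw [injective_iff_map_eq_zero]
    intro x hx
    have hax : a * (b * x) = 0 := by rw [show b * x = 0 from hx, mul_zero]
    rwa [← mul_assoc, h, one_mul] at hax
  obtain ⟨c, hc⟩ := (LinearMap.injective_iff_surjective (f := L)).mp hinj 1
  have hbc : b * c = 1 := hc
  have hac : a = c := by
    calc a = a * (b * c) := by rw [hbc, mul_one]
    _ = (a * b) * c := by rw [mul_assoc]
    _ = c := by rw [h, one_mul]
  rw [hac, hbc]

/-- `A ⟶ B ⟶ C --h--> ΣA` is an Auslander-Reiten triangle in the subcategory determined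
by `S`: a distinguished triangle with all three objects in `S`, non-zero connecting
morphism, such that every non-section `A ⟶ A'` with `A'` in `S` factors through `A ⟶ B`
and every non-retraction `C' ⟶ C` with `C'` in `S` factors through `B ⟶ C`. -/
def IsARTriangleIn (S : Set T) {A B C : T} (f : A ⟶ B) (g : B ⟶ C)
    (h : C ⟶ A⟦(1 : ℤ)⟧) : Prop :=
  A ∈ S ∧ B ∈ S ∧ C ∈ S ∧ (Triangle.mk f g h ∈ distTriang T) ∧ h ≠ 0 ∧
    (∀ A' : T, A' ∈ S → ∀ u : A ⟶ A',
      ¬(∃ v : A' ⟶ A, u ≫ v = 𝟙 A) → ∃ w : B ⟶ A', f ≫ w = u) ∧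
    (∀ C' : T, C' ∈ S → ∀ u : C' ⟶ C,
      ¬(∃ v : C ⟶ C', v ≫ u = 𝟙 C) → ∃ w : C' ⟶ B, w ≫ g = u)

/-- in a local endomorphism ring, orthogonal idempotent decompositions are trivial. -/
lemma local_indec {X : T} (hloc : IsLocalRing (End X)) :
    ¬ Limits.IsZero X ∧
      ∀ (X₁ X₂ : T) (i₁ : X₁ ⟶ X) (i₂ : X₂ ⟶ X) (p₁ : X ⟶ X₁) (p₂ : X ⟶ X₂),
        i₁ ≫ p₁ = 𝟙 X₁ → i₂ ≫ p₂ = 𝟙 X₂ → i₁ ≫ p₂ = 0 → i₂ ≫ p₁ = 0 →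
        p₁ ≫ i₁ + p₂ ≫ i₂ = 𝟙 X → Limits.IsZero X₁ ∨ Limits.IsZero X₂ := by
  constructor
  · intro hz
    have h10 : (1 : End X) = 0 := hz.eq_of_src (𝟙 X) 0
    exact one_ne_zero h10
  · intro X₁ X₂ i₁ i₂ p₁ p₂ hip₁ hip₂ _ _ hsum1
    have hadd : End.of (p₁ ≫ i₁) + End.of (p₂ ≫ i₂) = 1 := hsum1
    have hidem₁ : End.of (p₁ ≫ i₁) * End.of (p₁ ≫ i₁) = End.of (p₁ ≫ i₁) * 1 := by
      show (p₁ ≫ i₁) ≫ (p₁ ≫ i₁) = 𝟙 X ≫ (p₁ ≫ i₁)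
      rw [Category.assoc, ← Category.assoc i₁ p₁ i₁, hip₁, Category.id_comp,
        Category.id_comp]
    have hidem₂ : End.of (p₂ ≫ i₂) * End.of (p₂ ≫ i₂) = End.of (p₂ ≫ i₂) * 1 := by
      show (p₂ ≫ i₂) ≫ (p₂ ≫ i₂) = 𝟙 X ≫ (p₂ ≫ i₂)
      rw [Category.assoc, ← Category.assoc i₂ p₂ i₂, hip₂, Category.id_comp,
        Category.id_comp]
    rcases IsLocalRing.isUnit_or_isUnit_of_add_one hadd with hu | hu
    · right
      have he : End.of (p₁ ≫ i₁) = 1 := hu.mul_left_cancel hidem₁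
      have he2 : End.of (p₂ ≫ i₂) = 0 := by
        have h1 := hadd
        rw [he] at h1
        exact add_eq_left.mp h1
      have hz : 𝟙 X₂ = 0 := by
        calc 𝟙 X₂ = (i₂ ≫ p₂) ≫ (i₂ ≫ p₂) := by rw [hip₂, Category.id_comp]
        _ = i₂ ≫ (p₂ ≫ i₂) ≫ p₂ := by simp only [Category.assoc]
        _ = i₂ ≫ (0 : X ⟶ X) ≫ p₂ := by rw [show (p₂ ≫ i₂ : X ⟶ X) = 0 from he2]
        _ = 0 := by rw [Limits.zero_comp, Limits.comp_zero]
      exact (Limits.IsZero.iff_id_eq_zero X₂).mpr hz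
    · left
      have he : End.of (p₂ ≫ i₂) = 1 := hu.mul_left_cancel hidem₂
      have he2 : End.of (p₁ ≫ i₁) = 0 := by
        have h1 := hadd
        rw [he] at h1
        exact add_eq_right.mp h1
      have hz : 𝟙 X₁ = 0 := by
        calc 𝟙 X₁ = (i₁ ≫ p₁) ≫ (i₁ ≫ p₁) := by rw [hip₁, Category.id_comp]
        _ = i₁ ≫ (p₁ ≫ i₁) ≫ p₁ := by simp only [Category.assoc]
        _ = i₁ ≫ (0 : X ⟶ X) ≫ p₁ := by rw [show (p₁ ≫ i₁ : X ⟶ X) = 0 from he2]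
        _ = 0 := by rw [Limits.zero_comp, Limits.comp_zero]
      exact (Limits.IsZero.iff_id_eq_zero X₁).mpr hz

/-- The end terms of an Auslander-Reiten triangle in the subcategory `S` have local
endomorphism rings; in particular they are indecomposable. -/
theorem AR_triangle_end_terms_local (S : Set T)
    [EssentiallySmall.{v} T] [IsIdempotentComplete T]
    (hfd : ∀ X Y : T, FiniteDimensional k (X ⟶ Y))
    (hiso : ∀ {X Y : T}, (X ≅ Y) → X ∈ S → Y ∈ S)
    (hext : ∀ {A B C : T} (f : A ⟶ B) (g : B ⟶ C) (h : C ⟶ A⟦(1 : ℤ)⟧),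
      Triangle.mk f g h ∈ (distTriang T) → A ∈ S → C ∈ S → B ∈ S)
    (hsum : ∀ {A A₁ : T} (i : A₁ ⟶ A) (p : A ⟶ A₁), i ≫ p = 𝟙 A₁ → A ∈ S → A₁ ∈ S)
    {A B C : T} (f : A ⟶ B) (g : B ⟶ C) (h : C ⟶ A⟦(1 : ℤ)⟧)
    (hAR : IsARTriangleIn S f g h) :
    IsLocalRing (End A) ∧ IsLocalRing (End C) ∧
    -- in particular, `A` and `C` are indecomposable
    (¬ Limits.IsZero A ∧
      ∀ (A₁ A₂ : T) (i₁ : A₁ ⟶ A) (i₂ : A₂ ⟶ A) (p₁ : A ⟶ A₁) (p₂ : A ⟶ A₂),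
        i₁ ≫ p₁ = 𝟙 A₁ → i₂ ≫ p₂ = 𝟙 A₂ → i₁ ≫ p₂ = 0 → i₂ ≫ p₁ = 0 →
        p₁ ≫ i₁ + p₂ ≫ i₂ = 𝟙 A → Limits.IsZero A₁ ∨ Limits.IsZero A₂) ∧
    (¬ Limits.IsZero C ∧
      ∀ (C₁ C₂ : T) (i₁ : C₁ ⟶ C) (i₂ : C₂ ⟶ C) (p₁ : C ⟶ C₁) (p₂ : C ⟶ C₂),
        i₁ ≫ p₁ = 𝟙 C₁ → i₂ ≫ p₂ = 𝟙 C₂ → i₁ ≫ p₂ = 0 → i₂ ≫ p₁ = 0 →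
        p₁ ≫ i₁ + p₂ ≫ i₂ = 𝟙 C → Limits.IsZero C₁ ∨ Limits.IsZero C₂) := by
  obtain ⟨hA, hB, hC, hdt, hne, hsec, hret⟩ := hAR
  haveI : FiniteDimensional k (End A) := hfd A A
  haveI : FiniteDimensional k (End C) := hfd C C
  -- nontriviality
  have hidA : (𝟙 A : A ⟶ A) ≠ 0 := by
    intro h0
    apply hne
    calc h = h ≫ (𝟙 A)⟦(1 : ℤ)⟧' := by
          rw [CategoryTheory.Functor.map_id, Category.comp_id]
    _ = h ≫ ((0 : A ⟶ A))⟦(1 : ℤ)⟧' := by rw [h0]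
    _ = 0 := by rw [CategoryTheory.Functor.map_zero, Limits.comp_zero]
  have hidC : (𝟙 C : C ⟶ C) ≠ 0 := by
    intro h0
    apply hne
    rw [← Category.id_comp h, h0, Limits.zero_comp]
  haveI : Nontrivial (End A) := ⟨⟨1, 0, hidA⟩⟩
  haveI : Nontrivial (End C) := ⟨⟨1, 0, hidC⟩⟩
  -- nonunits of End A factor through f
  have hnuA : ∀ u : End A, ¬ IsUnit u → ∃ w : B ⟶ A, f ≫ w = End.asHom u := by
    intro u hu
    apply hsec A hA (End.asHom u)
    rintro ⟨v, hv⟩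
    have hv' : End.of v * u = 1 := hv
    exact hu ⟨⟨u, End.of v, my_mul_eq_one_comm (k := k) hv', hv'⟩, rfl⟩
  -- an endomorphism of A factoring through f cannot be a unit
  have hfacA : ∀ u : End A, (∃ w : B ⟶ A, f ≫ w = End.asHom u) → ¬ IsUnit u := by
    rintro u ⟨w, hw⟩ ⟨e, he⟩
    apply hne
    have h2 : End.asHom u ≫ End.asHom (e.inv : End A) = 𝟙 A := by
      show (e.inv : End A) * u = 1
      rw [← he]; exact e.inv_val
    have hsplit : f ≫ (w ≫ End.asHom (e.inv : End A)) = 𝟙 A := by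
      rw [← Category.assoc, hw, h2]
    have h31 : h ≫ f⟦(1 : ℤ)⟧' = 0 := comp_distTriang_mor_zero₃₁ _ hdt
    calc h = h ≫ 𝟙 (A⟦(1 : ℤ)⟧) := (Category.comp_id h).symm
    _ = h ≫ (𝟙 A)⟦(1 : ℤ)⟧' := by rw [CategoryTheory.Functor.map_id]
    _ = h ≫ (f ≫ (w ≫ End.asHom (e.inv : End A)))⟦(1 : ℤ)⟧' := by rw [hsplit]
    _ = (h ≫ f⟦(1 : ℤ)⟧') ≫ (w ≫ End.asHom (e.inv : End A))⟦(1 : ℤ)⟧' := by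
          rw [CategoryTheory.Functor.map_comp, Category.assoc]
    _ = 0 := by rw [h31, Limits.zero_comp]
  -- nonunits of End C kill h
  have hnuC : ∀ u : End C, ¬ IsUnit u → End.asHom u ≫ h = 0 := by
    intro u hu
    have hnr : ¬(∃ v : C ⟶ C, v ≫ End.asHom u = 𝟙 C) := by
      rintro ⟨v, hv⟩
      have hv' : u * End.of v = 1 := hv
      exact hu ⟨⟨u, End.of v, hv', my_mul_eq_one_comm (k := k) hv'⟩, rfl⟩
    obtain ⟨w, hw⟩ := hret C hC (End.asHom u) hnr
    have hgh : g ≫ h = 0 := comp_distTriang_mor_zero₂₃ _ hdt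
    rw [← hw, Category.assoc, hgh, Limits.comp_zero]
  -- localness
  have hlocA : IsLocalRing (End A) := by
    refine ⟨fun {a b} hab => ?_⟩
    by_contra hcon
    push_neg at hcon
    obtain ⟨ha, hb⟩ := hcon
    obtain ⟨wa, hwa⟩ := hnuA a ha
    obtain ⟨wb, hwb⟩ := hnuA b hb
    refine hfacA (a + b) ⟨wa + wb, ?_⟩ (hab ▸ isUnit_one)
    rw [Preadditive.comp_add, hwa, hwb]
  have hlocC : IsLocalRing (End C) := by
    refine ⟨fun {a b} hab => ?_⟩
    by_contra hcon
    push_neg at hcon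
    obtain ⟨ha, hb⟩ := hcon
    apply hne
    have hsum' : End.asHom (a + b) ≫ h
        = End.asHom a ≫ h + End.asHom b ≫ h := Preadditive.add_comp _ _ _ _ _ _
    have hz : End.asHom (a + b) ≫ h = 0 := by
      rw [hsum', hnuC a ha, hnuC b hb, add_zero]
    rw [← Category.id_comp h, show (𝟙 C : C ⟶ C) = End.asHom (a + b) from hab.symm, hz]
  exact ⟨hlocA, hlocC, local_indec hlocA, local_indec hlocC⟩
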